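/- arXiv:2005.13608 — 9 statements merged into one kernel-verified Lean document; each statement's English description precedes it below -/
import Mathlib

section
/- If f = (V0, V1, V2) is a total Roman dominating function of minimum weight on a graph G without isolated vertices, then the weight γ_tR(G) satisfies γ_tR(G) ≥ |V(G)| − (Δ(G) − 2)·|V2|. -/
open Finset

/-- A total Roman dominating function: labels in {0,1,2}, every 0-labeled vertex has a
2-labeled neighbor, and positive-labeled vertices induce a subgraph with no isolated vertex. -/
def IsTRDF {V : Type*} (G : SimpleGraph V) (f : V → ℕ) : Prop :=
  (∀ v, f v ≤ 2) ∧
  (∀ v, f v = 0 → ∃ u, G.Adj v u ∧ f u = 2) ∧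
  (∀ v, 0 < f v → ∃ u, G.Adj v u ∧ 0 < f u)

/-- The total Roman domination number. -/
noncomputable def trdn {V : Type*} (G : SimpleGraph V) [Fintype V] : ℕ :=
  sInf {w | ∃ f : V → ℕ, IsTRDF G f ∧ ∑ v, f v = w}

/-- A total dominating set. -/
def IsTotalDomSet {V : Type*} (G : SimpleGraph V) (D : Set V) : Prop :=
  ∀ v, ∃ u ∈ D, G.Adj v u

/-- The total domination number. -/
noncomputable def tdn {V : Type*} (G : SimpleGraph V) [Fintype V] : ℕ :=
  sInf {n | ∃ D : Finset V, IsTotalDomSet G ↑D ∧ D.card = n}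

/-- A packing: pairwise disjoint closed neighborhoods. -/
def IsPacking {V : Type*} (G : SimpleGraph V) (S : Set V) : Prop :=
  ∀ u ∈ S, ∀ v ∈ S, u ≠ v →
    Disjoint (insert u (G.neighborSet u)) (insert v (G.neighborSet v))

/-- The packing number. -/
noncomputable def packingNumber {V : Type*} (G : SimpleGraph V) [Fintype V] : ℕ :=
  sSup {n | ∃ S : Finset V, IsPacking G ↑S ∧ S.card = n}

/-- An open packing: pairwise disjoint open neighborhoods. -/
def IsOpenPacking {V : Type*} (G : SimpleGraph V) (S : Set V) : Prop :=
  ∀ u ∈ S, ∀ v ∈ S, u ≠ v → Disjoint (G.neighborSet u) (G.neighborSet v)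

/-- The open packing number. -/
noncomputable def openPackingNumber {V : Type*} (G : SimpleGraph V) [Fintype V] : ℕ :=
  sSup {n | ∃ S : Finset V, IsOpenPacking G ↑S ∧ S.card = n}

/-- The direct (tensor) product of two simple graphs. -/
def dirProd {V W : Type*} (G : SimpleGraph V) (H : SimpleGraph W) : SimpleGraph (V × W) where
  Adj p q := G.Adj p.1 q.1 ∧ H.Adj p.2 q.2
  symm := ⟨fun p q h => ⟨h.1.symm, h.2.symm⟩⟩
  loopless := ⟨fun p h => G.loopless.irrefl p.1 h.1⟩

/-- A graph with no isolated vertices. -/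
def NoIsolated {V : Type*} (G : SimpleGraph V) : Prop := ∀ v, ∃ u, G.Adj v u


theorem stmt_0 {V : Type*} [Fintype V] [DecidableEq V] (G : SimpleGraph V)
    [DecidableRel G.Adj] (hG : NoIsolated G) (f : V → ℕ)
    (hf : IsTRDF G f) (hmin : ∑ v, f v = trdn G) :
    (trdn G : ℤ) ≥ (Fintype.card V : ℤ) -
      ((G.maxDegree : ℤ) - 2) * ((Finset.univ.filter (fun v => f v = 2)).card : ℤ) := by
  classical
  set V0 := Finset.univ.filter (fun v => f v = 0) with hV0
  set V1 := Finset.univ.filter (fun v => f v = 1) with hV1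
  set V2 := Finset.univ.filter (fun v => f v = 2) with hV2
  set a := V0.card
  set b := V1.card
  set c := V2.card
  -- weight computation
  have hw : ∑ v, f v = b + 2 * c := by
    have hsplit : ∀ v : V, f v = (if f v = 1 then 1 else 0) + (if f v = 2 then 2 else 0) := by
      intro v
      have h2 := hf.1 v
      interval_cases (f v) <;> simp
    calc ∑ v, f v = ∑ v : V, ((if f v = 1 then 1 else 0) + (if f v = 2 then 2 else 0)) :=
          Finset.sum_congr rfl (fun v _ => hsplit v)
      _ = (∑ v : V, if f v = 1 then 1 else 0) + ∑ v : V, (if f v = 2 then 2 else 0) :=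
          Finset.sum_add_distrib
      _ = b + 2 * c := by
          have h1 : (∑ v : V, if f v = 1 then 1 else 0) = b := by
            rw [← Finset.sum_filter]; simp [hV1]; rfl
          have h2 : (∑ v : V, if f v = 2 then 2 else 0) = 2 * c := by
            rw [← Finset.sum_filter]; simp [hV2, Finset.sum_const, mul_comm]; rfl
          rw [h1, h2]
  -- cardinality partition
  have hn : Fintype.card V = a + b + c := by
    have hsplit : ∀ v : V, ((if f v = 0 then 1 else 0) + (if f v = 1 then 1 else 0)
        + (if f v = 2 then 1 else 0)) = 1 := by
      intro v
      have h2 := hf.1 v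
      interval_cases (f v) <;> simp
    have heq : ∑ v : V, ((if f v = 0 then 1 else 0) + (if f v = 1 then 1 else 0)
        + (if f v = 2 then 1 else 0)) = Fintype.card V := by
      rw [Finset.sum_congr rfl (fun v _ => hsplit v), Finset.sum_const, smul_eq_mul,
        mul_one, Finset.card_univ]
    rw [← heq, Finset.sum_add_distrib, Finset.sum_add_distrib]
    have h0 : (∑ v : V, if f v = 0 then 1 else 0) = a := by
      rw [← Finset.sum_filter]; simp [hV0]; rfl
    have h1 : (∑ v : V, if f v = 1 then 1 else 0) = b := by
      rw [← Finset.sum_filter]; simp [hV1]; rfl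
    have h2 : (∑ v : V, if f v = 2 then 1 else 0) = c := by
      rw [← Finset.sum_filter]; simp [hV2]; rfl
    rw [h0, h1, h2]
  -- key counting: a ≤ (Δ - 1) * c
  have hkey : a ≤ c * (G.maxDegree - 1) := by
    have hsub : V0 ⊆ V2.biUnion (fun v => G.neighborFinset v ∩ V0) := by
      intro u hu
      simp only [hV0, Finset.mem_filter, Finset.mem_univ, true_and] at hu
      obtain ⟨w, hadj, hw2⟩ := hf.2.1 u hu
      refine Finset.mem_biUnion.2 ⟨w, ?_, ?_⟩
      · simp [hV2, hw2]
      · simp [hV0, SimpleGraph.mem_neighborFinset, hadj.symm, hu]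
    have hcard : ∀ v ∈ V2, (G.neighborFinset v ∩ V0).card ≤ G.maxDegree - 1 := by
      intro v hv
      simp only [hV2, Finset.mem_filter, Finset.mem_univ, true_and] at hv
      obtain ⟨u, hadj, hupos⟩ := hf.2.2 v (by omega)
      have husub : G.neighborFinset v ∩ V0 ⊆ (G.neighborFinset v).erase u := by
        intro x hx
        simp only [Finset.mem_inter, hV0, Finset.mem_filter, Finset.mem_univ, true_and] at hx
        refine Finset.mem_erase.2 ⟨?_, hx.1⟩
        rintro rfl
        omega
      calc (G.neighborFinset v ∩ V0).card ≤ ((G.neighborFinset v).erase u).card :=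
            Finset.card_le_card husub
        _ ≤ (G.neighborFinset v).card - 1 := by
            rw [Finset.card_erase_of_mem (by simpa [SimpleGraph.mem_neighborFinset] using hadj)]
        _ = G.degree v - 1 := by rw [SimpleGraph.card_neighborFinset_eq_degree]
        _ ≤ G.maxDegree - 1 := Nat.sub_le_sub_right (G.degree_le_maxDegree v) 1
    calc a ≤ (V2.biUnion (fun v => G.neighborFinset v ∩ V0)).card :=
          Finset.card_le_card hsub
      _ ≤ ∑ v ∈ V2, (G.neighborFinset v ∩ V0).card := Finset.card_biUnion_le
      _ ≤ ∑ _v ∈ V2, (G.maxDegree - 1) := Finset.sum_le_sum hcard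
      _ = c * (G.maxDegree - 1) := by simp [Finset.sum_const, mul_comm]; left; rfl
  rw [← hmin]
  by_cases hc : c = 0
  · have ha : a = 0 := by
      have := hkey; rw [hc] at this; simpa using this
    rw [hw, hn, ha, hc]
    push_cast
    linarith
  · -- c > 0 : some vertex has f v = 2, hence degree ≥ 1, so maxDegree ≥ 1
    have hdelta : 1 ≤ G.maxDegree := by
      obtain ⟨v, hv⟩ := Finset.card_pos.mp (Nat.pos_of_ne_zero hc)
      obtain ⟨u, hadj⟩ := hG v
      have h1 : 0 < G.degree v := by
        rw [← SimpleGraph.card_neighborFinset_eq_degree]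
        exact Finset.card_pos.2 ⟨u, (SimpleGraph.mem_neighborFinset G v u).2 hadj⟩
      exact le_trans h1 (G.degree_le_maxDegree v)
    rw [hw, hn]
    have hkey' : (a : ℤ) ≤ c * ((G.maxDegree : ℤ) - 1) := by
      have := hkey
      have : (a : ℤ) ≤ (c : ℤ) * ((G.maxDegree - 1 : ℕ) : ℤ) := by exact_mod_cast this
      rwa [Nat.cast_sub hdelta] at this
    push_cast
    nlinarith [hkey']
end

section
/- If D is an efficient open dominating set of a graph G, then D is a minimum total dominating set of G, i.e., |D| = γ_t(G). -/
open Finset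

theorem stmt_4 {V : Type*} [Fintype V] (G : SimpleGraph V) (D : Finset V)
    (hD : IsTotalDomSet G ↑D) (hop : IsOpenPacking G ↑D) :
    D.card = tdn G := by
  have hmem : D.card ∈ {n | ∃ D : Finset V, IsTotalDomSet G ↑D ∧ D.card = n} := ⟨D, hD, rfl⟩
  refine le_antisymm ?_ (Nat.sInf_le hmem)
  obtain ⟨D', hD', hcard⟩ := Nat.sInf_mem (Set.nonempty_of_mem hmem)
  unfold tdn
  rw [← hcard]
  choose f hfmem hfadj using hD'
  refine Finset.card_le_card_of_injOn f (fun u _ => hfmem u) ?_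
  intro u hu v hv hfe
  by_contra hne
  have h := hop u hu v hv hne
  exact (Set.disjoint_left.mp h (G.mem_neighborSet u (f u) |>.mpr (hfadj u)))
    (by rw [hfe]; exact (G.mem_neighborSet v (f v)).mpr (hfadj v))
end

section
/- For any two graphs G and H without isolated vertices, γ_tR(G × H) ≤ 2·γ_t(G)·γ_t(H), where G × H is the direct (tensor) product. -/
open Finset

theorem stmt_5 {V W : Type*} [Fintype V] [Fintype W]
    (G : SimpleGraph V) (H : SimpleGraph W)
    (hG : NoIsolated G) (hH : NoIsolated H) :
    trdn (dirProd G H) ≤ 2 * tdn G * tdn H := by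
  classical
  have hneG : tdn G ∈ {n | ∃ D : Finset V, IsTotalDomSet G ↑D ∧ D.card = n} :=
    Nat.sInf_mem ⟨Finset.univ.card, Finset.univ,
      fun v => (hG v).imp (fun u h => ⟨Finset.mem_coe.2 (Finset.mem_univ u), h⟩), rfl⟩
  have hneH : tdn H ∈ {n | ∃ D : Finset W, IsTotalDomSet H ↑D ∧ D.card = n} :=
    Nat.sInf_mem ⟨Finset.univ.card, Finset.univ,
      fun v => (hH v).imp (fun u h => ⟨Finset.mem_coe.2 (Finset.mem_univ u), h⟩), rfl⟩
  obtain ⟨DG, hDG, hcG⟩ := hneG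
  obtain ⟨DH, hDH, hcH⟩ := hneH
  set f : V × W → ℕ := fun p => if p.1 ∈ DG ∧ p.2 ∈ DH then 2 else 0 with hf
  have hTRDF : IsTRDF (dirProd G H) f := by
    refine ⟨fun v => ?_, fun v hv => ?_, fun v hv => ?_⟩
    · simp only [hf]; split <;> omega
    · obtain ⟨u, hu, hadj⟩ := hDG v.1
      obtain ⟨x, hx, hadj'⟩ := hDH v.2
      exact ⟨(u, x), ⟨hadj, hadj'⟩, by simp [hf, Finset.mem_coe.1 hu, Finset.mem_coe.1 hx]⟩
    · obtain ⟨u, hu, hadj⟩ := hDG v.1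
      obtain ⟨x, hx, hadj'⟩ := hDH v.2
      exact ⟨(u, x), ⟨hadj, hadj'⟩, by simp [hf, Finset.mem_coe.1 hu, Finset.mem_coe.1 hx]⟩
  have hsum : ∑ p, f p = 2 * DG.card * DH.card := by
    rw [Fintype.sum_prod_type]
    have h1 : ∀ v : V, ∑ w, f (v, w) = if v ∈ DG then 2 * DH.card else 0 := by
      intro v
      by_cases h : v ∈ DG
      · simp only [hf, h, true_and, if_true]
        rw [Finset.sum_ite_mem, Finset.univ_inter, Finset.sum_const, smul_eq_mul, mul_comm]
      · simp [hf, h]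
    rw [Finset.sum_congr rfl (fun v _ => h1 v), Finset.sum_ite_mem, Finset.univ_inter,
      Finset.sum_const, smul_eq_mul]
    ring
  have := Nat.sInf_le (s := {w | ∃ f : V × W → ℕ, IsTRDF (dirProd G H) f ∧ ∑ v, f v = w})
    ⟨f, hTRDF, rfl⟩
  calc trdn (dirProd G H) ≤ ∑ p, f p := this
    _ = 2 * tdn G * tdn H := by rw [hsum, hcG, hcH]
end

section
/- Let G and H be graphs without isolated vertices, let g = (A0,A1,A2) be a total Roman dominating function on G and h = (B0,B1,B2) be a total Roman dominating function on H. Then γ_tR(G × H) ≤ ω(g)·ω(h) − 2·|A2|·|B2|, where ω denotes weight. -/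
open Finset

theorem stmt_6 {V W : Type*} [Fintype V] [Fintype W] [DecidableEq V] [DecidableEq W]
    (G : SimpleGraph V) (H : SimpleGraph W)
    (hG : NoIsolated G) (hH : NoIsolated H)
    (g : V → ℕ) (h : W → ℕ) (hg : IsTRDF G g) (hh : IsTRDF H h) :
    (trdn (dirProd G H) : ℤ) ≤ (∑ v, g v : ℤ) * (∑ w, h w : ℤ) -
      2 * ((Finset.univ.filter (fun v => g v = 2)).card : ℤ) *
        ((Finset.univ.filter (fun w => h w = 2)).card : ℤ) := by
  classical
  set f : V × W → ℕ := fun p => min (g p.1 * h p.2) 2 with hfdef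
  have hTRDF : IsTRDF (dirProd G H) f := by
    refine ⟨fun p => min_le_right _ _, ?_, ?_⟩
    · rintro ⟨u, v⟩ h0
      have hprod : g u * h v = 0 := by
        rcases Nat.min_eq_zero_iff.mp h0 with h1 | h1
        · exact h1
        · omega
      rcases Nat.mul_eq_zero.mp hprod with hu | hv
      · obtain ⟨u', hu'adj, hu'2⟩ := hg.2.1 u hu
        by_cases hv0 : h v = 0
        · obtain ⟨v', hv'adj, hv'2⟩ := hh.2.1 v hv0
          exact ⟨(u', v'), ⟨hu'adj, hv'adj⟩, by simp [hfdef, hu'2, hv'2]⟩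
        · obtain ⟨v', hv'adj, hv'pos⟩ := hh.2.2 v (Nat.pos_of_ne_zero hv0)
          refine ⟨(u', v'), ⟨hu'adj, hv'adj⟩, ?_⟩
          have h2 : 2 ≤ g u' * h v' := by rw [hu'2]; omega
          simp only [hfdef]
          exact min_eq_right h2
      · obtain ⟨v', hv'adj, hv'2⟩ := hh.2.1 v hv
        by_cases hu0 : g u = 0
        · obtain ⟨u', hu'adj, hu'2⟩ := hg.2.1 u hu0
          exact ⟨(u', v'), ⟨hu'adj, hv'adj⟩, by simp [hfdef, hu'2, hv'2]⟩
        · obtain ⟨u', hu'adj, hu'pos⟩ := hg.2.2 u (Nat.pos_of_ne_zero hu0)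
          refine ⟨(u', v'), ⟨hu'adj, hv'adj⟩, ?_⟩
          have h2 : 2 ≤ g u' * h v' := by rw [hv'2]; omega
          simp only [hfdef]
          exact min_eq_right h2
    · rintro ⟨u, v⟩ hp
      have hmul : 0 < g u * h v := by
        simp only [hfdef, lt_min_iff] at hp
        exact hp.1
      have hu : 0 < g u := Nat.pos_of_ne_zero fun hz => by simp [hz] at hmul
      have hv : 0 < h v := Nat.pos_of_ne_zero fun hz => by simp [hz] at hmul
      obtain ⟨u', hu'adj, hu'pos⟩ := hg.2.2 u hu
      obtain ⟨v', hv'adj, hv'pos⟩ := hh.2.2 v hv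
      refine ⟨(u', v'), ⟨hu'adj, hv'adj⟩, ?_⟩
      simp only [hfdef, lt_min_iff]
      exact ⟨Nat.mul_pos hu'pos hv'pos, by norm_num⟩
  have hle : trdn (dirProd G H) ≤ ∑ p, f p :=
    Nat.sInf_le ⟨f, hTRDF, rfl⟩
  have step : ∀ p : V × W, (f p : ℤ) =
      (g p.1 : ℤ) * (h p.2 : ℤ) -
      (if g p.1 = 2 then (2 : ℤ) else 0) * (if h p.2 = 2 then (1 : ℤ) else 0) := by
    rintro ⟨u, v⟩
    have hu := hg.1 u
    have hv := hh.1 v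
    simp only [hfdef]
    interval_cases hgu : g u <;> interval_cases hhv : h v <;> norm_num
  have key : (∑ p : V × W, (f p : ℤ)) =
      (∑ v, (g v : ℤ)) * (∑ w, (h w : ℤ)) -
      2 * ((Finset.univ.filter (fun v => g v = 2)).card : ℤ) *
        ((Finset.univ.filter (fun w => h w = 2)).card : ℤ) := by
    calc (∑ p : V × W, (f p : ℤ))
        = ∑ u : V, ∑ v : W, ((g u : ℤ) * (h v : ℤ) -
            (if g u = 2 then (2 : ℤ) else 0) * (if h v = 2 then (1 : ℤ) else 0)) := by
          rw [Fintype.sum_prod_type]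
          exact Finset.sum_congr rfl fun u _ => Finset.sum_congr rfl fun v _ => step (u, v)
      _ = (∑ u : V, ∑ v : W, (g u : ℤ) * (h v : ℤ)) -
          ∑ u : V, ∑ v : W, (if g u = 2 then (2 : ℤ) else 0) * (if h v = 2 then (1 : ℤ) else 0) := by
          simp only [Finset.sum_sub_distrib]
      _ = (∑ v, (g v : ℤ)) * (∑ w, (h w : ℤ)) -
          (∑ u : V, if g u = 2 then (2 : ℤ) else 0) * (∑ v : W, if h v = 2 then (1 : ℤ) else 0) := by
          rw [Fintype.sum_mul_sum, Fintype.sum_mul_sum]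
      _ = _ := by
          rw [Finset.sum_boole]
          have : (∑ u : V, if g u = 2 then (2 : ℤ) else 0)
              = 2 * ((Finset.univ.filter (fun v => g v = 2)).card : ℤ) := by
            rw [← Finset.sum_boole, Finset.mul_sum]
            exact Finset.sum_congr rfl fun u _ => by split <;> ring
          rw [this]
  have hcast : (↑(∑ p : V × W, f p) : ℤ) = ∑ p : V × W, (f p : ℤ) := by push_cast; rfl
  calc (trdn (dirProd G H) : ℤ) ≤ (↑(∑ p : V × W, f p) : ℤ) := by exact_mod_cast hle
    _ = _ := by rw [hcast, key]
end

section
/- For any graphs G and H without isolated vertices, each of order at least three, γ_tR(G × H) ≥ max{ρ_o(H)·γ_tR(G)/2, ρ_o(G)·γ_tR(H)/2}, where ρ_o denotes the open packing number. -/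
open Finset

-- auxiliary lemmas

lemma noIso_dirProd {V W : Type*} {G : SimpleGraph V} {H : SimpleGraph W}
    (hG : NoIsolated G) (hH : NoIsolated H) : NoIsolated (dirProd G H) := by
  rintro ⟨g, h⟩
  obtain ⟨g', hg'⟩ := hG g
  obtain ⟨h', hh'⟩ := hH h
  exact ⟨(g', h'), hg', hh'⟩

lemma tdn_set_nonempty {V : Type*} [Fintype V] (G : SimpleGraph V) (hG : NoIsolated G) :
    {n | ∃ D : Finset V, IsTotalDomSet G ↑D ∧ D.card = n}.Nonempty := by
  refine ⟨(univ : Finset V).card, univ, ?_, rfl⟩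
  intro v
  obtain ⟨u, hu⟩ := hG v
  exact ⟨u, by simp, hu⟩

lemma tdn_exists {V : Type*} [Fintype V] (G : SimpleGraph V) (hG : NoIsolated G) :
    ∃ D : Finset V, IsTotalDomSet G ↑D ∧ D.card = tdn G :=
  Nat.sInf_mem (tdn_set_nonempty G hG)

lemma opn_exists {V : Type*} [Fintype V] (G : SimpleGraph V) :
    ∃ S : Finset V, IsOpenPacking G ↑S ∧ S.card = openPackingNumber G := by
  have hne : (0 : ℕ) ∈ {n | ∃ S : Finset V, IsOpenPacking G ↑S ∧ S.card = n} := by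
    exact ⟨∅, by intro u hu; simp at hu, by simp⟩
  have hbdd : BddAbove {n | ∃ S : Finset V, IsOpenPacking G ↑S ∧ S.card = n} := by
    refine ⟨Fintype.card V, ?_⟩
    rintro n ⟨S, _, rfl⟩
    exact S.card_le_univ
  exact Nat.sSup_mem ⟨0, hne⟩ hbdd

lemma tdn_le_trdn {V : Type*} [Fintype V] (G : SimpleGraph V) (hG : NoIsolated G) :
    tdn G ≤ trdn G := by
  classical
  have hne : {w | ∃ f : V → ℕ, IsTRDF G f ∧ ∑ v, f v = w}.Nonempty := by
    refine ⟨∑ v : V, 2, fun _ => 2, ⟨fun v => le_refl 2, fun v h => by simp at h, ?_⟩, rfl⟩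
    intro v _
    obtain ⟨u, hu⟩ := hG v
    exact ⟨u, hu, by norm_num⟩
  obtain ⟨f, ⟨hf2, hf0, hfp⟩, hsum⟩ := Nat.sInf_mem hne
  set D : Finset V := univ.filter (fun v => 0 < f v) with hD
  have hdom : IsTotalDomSet G ↑D := by
    intro v
    rcases Nat.eq_zero_or_pos (f v) with h | h
    · obtain ⟨u, hadj, hu⟩ := hf0 v h
      refine ⟨u, ?_, hadj⟩
      rw [hD]; simp only [Finset.coe_filter, Set.mem_setOf_eq]
      exact ⟨Finset.mem_univ u, by rw [hu]; norm_num⟩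
    · obtain ⟨u, hadj, hu⟩ := hfp v h
      refine ⟨u, ?_, hadj⟩
      rw [hD]; simp only [Finset.coe_filter, Set.mem_setOf_eq]
      exact ⟨Finset.mem_univ u, hu⟩
  have hcard : D.card ≤ ∑ v, f v := by
    calc D.card = ∑ _v ∈ D, 1 := by simp
    _ ≤ ∑ v ∈ D, f v := Finset.sum_le_sum (fun v hv => by
        simp only [hD, Finset.mem_filter] at hv; exact hv.2)
    _ ≤ ∑ v, f v := Finset.sum_le_sum_of_subset (Finset.subset_univ D)
  calc tdn G ≤ D.card := Nat.sInf_le ⟨D, hdom, rfl⟩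
  _ ≤ ∑ v, f v := hcard
  _ = trdn G := hsum

lemma trdn_le_two_tdn {V : Type*} [Fintype V] (G : SimpleGraph V) (hG : NoIsolated G) :
    trdn G ≤ 2 * tdn G := by
  classical
  obtain ⟨D, hdom, hcard⟩ := tdn_exists G hG
  set f : V → ℕ := fun v => if v ∈ D then 2 else 0 with hf
  have hTRDF : IsTRDF G f := by
    refine ⟨fun v => by simp [hf]; split <;> omega, fun v hv => ?_, fun v hv => ?_⟩
    · obtain ⟨u, hu, hadj⟩ := hdom v
      exact ⟨u, hadj, by simp [hf, Finset.mem_coe.mp hu]⟩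
    · obtain ⟨u, hu, hadj⟩ := hdom v
      exact ⟨u, hadj, by simp [hf, Finset.mem_coe.mp hu]⟩
  have hsum : ∑ v, f v = 2 * D.card := by
    rw [Finset.sum_ite_mem, Finset.univ_inter, Finset.sum_const, smul_eq_mul, mul_comm]
  calc trdn G ≤ ∑ v, f v := Nat.sInf_le ⟨f, hTRDF, rfl⟩
  _ = 2 * D.card := hsum
  _ = 2 * tdn G := by rw [hcard]

lemma key_ineq {V W : Type*} [Fintype V] [Fintype W]
    (G : SimpleGraph V) (H : SimpleGraph W)
    (hG : NoIsolated G) (hH : NoIsolated H) :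
    openPackingNumber H * tdn G ≤ tdn (dirProd G H) := by
  classical
  obtain ⟨S, hS, hScard⟩ := opn_exists H
  obtain ⟨D, hD, hDcard⟩ := tdn_exists (dirProd G H) (noIso_dirProd hG hH)
  -- for each h in S, filter of D
  set Fh : W → Finset (V × W) := fun h => D.filter (fun p => H.Adj h p.2) with hFh
  have hdomh : ∀ h, tdn G ≤ (Fh h).card := by
    intro h
    set Dh : Finset V := (Fh h).image Prod.fst with hDh
    have hdom : IsTotalDomSet G ↑Dh := by
      intro g
      obtain ⟨p, hpD, hadj⟩ := hD (g, h)
      refine ⟨p.1, ?_, hadj.1⟩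
      simp only [hDh, Finset.coe_image, Set.mem_image, Finset.mem_coe]
      exact ⟨p, by simp [hFh, Finset.mem_coe.mp hpD, hadj.2], rfl⟩
    calc tdn G ≤ Dh.card := Nat.sInf_le ⟨Dh, hdom, rfl⟩
    _ ≤ (Fh h).card := by rw [hDh]; exact Finset.card_image_le
  have hdisj : ∀ h ∈ S, ∀ h' ∈ S, h ≠ h' → Disjoint (Fh h) (Fh h') := by
    intro h hh h' hh' hne
    have := hS h hh h' hh' hne
    rw [Finset.disjoint_left]
    intro p hp hp'
    simp only [hFh, Finset.mem_filter] at hp hp'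
    exact Set.disjoint_left.mp this hp.2 hp'.2
  have hbU : S.biUnion Fh ⊆ D := by
    intro p hp
    simp only [Finset.mem_biUnion, hFh, Finset.mem_filter] at hp
    obtain ⟨h, _, hpD, _⟩ := hp
    exact hpD
  calc openPackingNumber H * tdn G = ∑ _h ∈ S, tdn G := by
        rw [Finset.sum_const, smul_eq_mul, hScard]
  _ ≤ ∑ h ∈ S, (Fh h).card := Finset.sum_le_sum (fun h _ => hdomh h)
  _ = (S.biUnion Fh).card := (Finset.card_biUnion hdisj).symm
  _ ≤ D.card := Finset.card_le_card hbU
  _ = tdn (dirProd G H) := hDcard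

lemma key_ineq' {V W : Type*} [Fintype V] [Fintype W]
    (G : SimpleGraph V) (H : SimpleGraph W)
    (hG : NoIsolated G) (hH : NoIsolated H) :
    openPackingNumber G * tdn H ≤ tdn (dirProd G H) := by
  classical
  obtain ⟨S, hS, hScard⟩ := opn_exists G
  obtain ⟨D, hD, hDcard⟩ := tdn_exists (dirProd G H) (noIso_dirProd hG hH)
  set Fh : V → Finset (V × W) := fun g => D.filter (fun p => G.Adj g p.1) with hFh
  have hdomh : ∀ g, tdn H ≤ (Fh g).card := by
    intro g
    set Dh : Finset W := (Fh g).image Prod.snd with hDh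
    have hdom : IsTotalDomSet H ↑Dh := by
      intro h
      obtain ⟨p, hpD, hadj⟩ := hD (g, h)
      refine ⟨p.2, ?_, hadj.2⟩
      simp only [hDh, Finset.coe_image, Set.mem_image, Finset.mem_coe]
      exact ⟨p, by simp [hFh, Finset.mem_coe.mp hpD, hadj.1], rfl⟩
    calc tdn H ≤ Dh.card := Nat.sInf_le ⟨Dh, hdom, rfl⟩
    _ ≤ (Fh g).card := by rw [hDh]; exact Finset.card_image_le
  have hdisj : ∀ g ∈ S, ∀ g' ∈ S, g ≠ g' → Disjoint (Fh g) (Fh g') := by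
    intro g hg g' hg' hne
    have := hS g hg g' hg' hne
    rw [Finset.disjoint_left]
    intro p hp hp'
    simp only [hFh, Finset.mem_filter] at hp hp'
    exact Set.disjoint_left.mp this hp.2 hp'.2
  have hbU : S.biUnion Fh ⊆ D := by
    intro p hp
    simp only [Finset.mem_biUnion, hFh, Finset.mem_filter] at hp
    obtain ⟨g, _, hpD, _⟩ := hp
    exact hpD
  calc openPackingNumber G * tdn H = ∑ _g ∈ S, tdn H := by
        rw [Finset.sum_const, smul_eq_mul, hScard]
  _ ≤ ∑ g ∈ S, (Fh g).card := Finset.sum_le_sum (fun g _ => hdomh g)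
  _ = (S.biUnion Fh).card := (Finset.card_biUnion hdisj).symm
  _ ≤ D.card := Finset.card_le_card hbU
  _ = tdn (dirProd G H) := hDcard

theorem stmt_9 {V W : Type*} [Fintype V] [Fintype W]
    (G : SimpleGraph V) (H : SimpleGraph W)
    (hG : NoIsolated G) (hH : NoIsolated H)
    (hV : 3 ≤ Fintype.card V) (hW : 3 ≤ Fintype.card W) :
    (trdn (dirProd G H) : ℝ) ≥
      max ((openPackingNumber H : ℝ) * trdn G / 2)
        ((openPackingNumber G : ℝ) * trdn H / 2) := by
  have h1 : openPackingNumber H * trdn G ≤ 2 * trdn (dirProd G H) := by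
    calc openPackingNumber H * trdn G ≤ openPackingNumber H * (2 * tdn G) :=
          Nat.mul_le_mul_left _ (trdn_le_two_tdn G hG)
    _ = 2 * (openPackingNumber H * tdn G) := by ring
    _ ≤ 2 * tdn (dirProd G H) := Nat.mul_le_mul_left _ (key_ineq G H hG hH)
    _ ≤ 2 * trdn (dirProd G H) :=
          Nat.mul_le_mul_left _ (tdn_le_trdn _ (noIso_dirProd hG hH))
  have h2 : openPackingNumber G * trdn H ≤ 2 * trdn (dirProd G H) := by
    calc openPackingNumber G * trdn H ≤ openPackingNumber G * (2 * tdn H) :=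
          Nat.mul_le_mul_left _ (trdn_le_two_tdn H hH)
    _ = 2 * (openPackingNumber G * tdn H) := by ring
    _ ≤ 2 * tdn (dirProd G H) := Nat.mul_le_mul_left _ (key_ineq' G H hG hH)
    _ ≤ 2 * trdn (dirProd G H) :=
          Nat.mul_le_mul_left _ (tdn_le_trdn _ (noIso_dirProd hG hH))
  rw [ge_iff_le, max_le_iff]
  constructor
  · rw [div_le_iff₀ (by norm_num)]
    calc (openPackingNumber H : ℝ) * trdn G = ((openPackingNumber H * trdn G : ℕ) : ℝ) := by
          push_cast; ring
    _ ≤ ((2 * trdn (dirProd G H) : ℕ) : ℝ) := by exact_mod_cast h1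
    _ = (trdn (dirProd G H) : ℝ) * 2 := by push_cast; ring
  · rw [div_le_iff₀ (by norm_num)]
    calc (openPackingNumber G : ℝ) * trdn H = ((openPackingNumber G * trdn H : ℕ) : ℝ) := by
          push_cast; ring
    _ ≤ ((2 * trdn (dirProd G H) : ℕ) : ℝ) := by exact_mod_cast h2
    _ = (trdn (dirProd G H) : ℝ) * 2 := by push_cast; ring
end

section
/- If G is a triangle-free graph having a maximum open packing that induces a disjoint union of copies of K_2 (a perfect matching on itself), and H is a bipartite graph without isolated vertices of order at least two, then γ_tR(G × H) ≥ ρ_o(G)·γ_tR(H). -/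
open Finset

lemma dirProd_adj {V W : Type*} (G : SimpleGraph V) (H : SimpleGraph W) (p q : V × W) :
    (dirProd G H).Adj p q ↔ G.Adj p.1 q.1 ∧ H.Adj p.2 q.2 := Iff.rfl

theorem stmt_11 {V W : Type*} [Fintype V] [Fintype W]
    (G : SimpleGraph V) (H : SimpleGraph W)
    (hGfree : G.CliqueFree 3) (hG : NoIsolated G)
    (S : Finset V) (hS : IsOpenPacking G ↑S) (hScard : S.card = openPackingNumber G)
    (hmatch : ∀ u ∈ S, ∃! v, v ∈ S ∧ G.Adj u v)
    (hHbip : H.Colorable 2) (hW : 2 ≤ Fintype.card W) (hH : NoIsolated H) :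
    trdn (dirProd G H) ≥ openPackingNumber G * trdn H := by
  classical
  rw [ge_iff_le, ← hScard]
  obtain ⟨c⟩ := hHbip
  -- partner function
  have hmatch' : ∀ u : V, ∃ v, u ∈ S → v ∈ S ∧ G.Adj u v ∧ ∀ y, y ∈ S ∧ G.Adj u y → y = v := by
    intro u
    by_cases h : u ∈ S
    · obtain ⟨v, hv, huniq⟩ := hmatch u h
      exact ⟨v, fun _ => ⟨hv.1, hv.2, huniq⟩⟩
    · exact ⟨u, fun h' => absurd h' h⟩
  choose p hp using hmatch'
  have hpS : ∀ u ∈ S, p u ∈ S := fun u hu => (hp u hu).1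
  have hpadj : ∀ u ∈ S, G.Adj u (p u) := fun u hu => (hp u hu).2.1
  have hpinv : ∀ u ∈ S, p (p u) = u := by
    intro u hu
    exact ((hp (p u) (hpS u hu)).2.2 u ⟨hu, (hpadj u hu).symm⟩).symm
  have fin2 : ∀ a b : Fin 2, a ≠ b → a = 0 → ¬ b = 0 := by decide
  have fin2' : ∀ a b : Fin 2, a ≠ b → ¬ a = 0 → b = 0 := by decide
  apply le_csInf
  · refine ⟨∑ v : V × W, (2 : ℕ), fun _ => 2, ⟨fun v => le_refl 2,
      fun v h => absurd h (by norm_num), fun v _ => ?_⟩, rfl⟩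
    obtain ⟨x', hx'⟩ := hG v.1
    obtain ⟨y', hy'⟩ := hH v.2
    exact ⟨(x', y'), ⟨hx', hy'⟩, by norm_num⟩
  · rintro w ⟨f, ⟨hf2, hf0, hft⟩, rfl⟩
    set sF : V → W → ℕ := fun x y => ∑ x' ∈ G.neighborFinset x, f (x', y) with hsF
    have hle : ∀ x x' y, G.Adj x x' → f (x', y) ≤ sF x y := by
      intro x x' y h
      exact Finset.single_le_sum (f := fun z => f (z, y)) (fun _ _ => Nat.zero_le _)
        ((G.mem_neighborFinset x x').mpr h)
    have key0 : ∀ x y, f (x, y) = 0 → ∃ y', H.Adj y y' ∧ 2 ≤ sF x y' := by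
      intro x y h
      obtain ⟨q, hadj, hq2⟩ := hf0 (x, y) h
      rw [dirProd_adj] at hadj
      exact ⟨q.2, hadj.2, hq2 ▸ hle x q.1 q.2 hadj.1⟩
    have keyT : ∀ x y, ∃ y', H.Adj y y' ∧ 0 < sF x y' := by
      intro x y
      by_cases h : f (x, y) = 0
      · obtain ⟨y', h1, h2⟩ := key0 x y h
        exact ⟨y', h1, by omega⟩
      · obtain ⟨q, hadj, hq⟩ := hft (x, y) (Nat.pos_of_ne_zero h)
        rw [dirProd_adj] at hadj
        exact ⟨q.2, hadj.2, lt_of_lt_of_le hq (hle x q.1 q.2 hadj.1)⟩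
    have step1 : ∀ u ∈ S, trdn H ≤
        ∑ y, (if c y = 0 then min 2 (sF u y) else min 2 (sF (p u) y)) := by
      intro u hu
      apply Nat.sInf_le
      refine ⟨_, ⟨fun y => by split <;> exact min_le_left _ _, ?_, ?_⟩, rfl⟩
      · intro y hy
        by_cases hc : c y = 0
        · rw [if_pos hc] at hy
          have hsu : sF u y = 0 := by omega
          have hfv : f (p u, y) = 0 := by
            have := hle u (p u) y (hpadj u hu); omega
          obtain ⟨y', hyy', h2⟩ := key0 (p u) y hfv
          have hc' : ¬ c y' = 0 := fin2 _ _ (c.valid hyy') hc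
          exact ⟨y', hyy', by rw [if_neg hc']; omega⟩
        · rw [if_neg hc] at hy
          have hsv : sF (p u) y = 0 := by omega
          have hfu : f (u, y) = 0 := by
            have := hle (p u) u y (hpadj u hu).symm; omega
          obtain ⟨y', hyy', h2⟩ := key0 u y hfu
          have hc' : c y' = 0 := fin2' _ _ (c.valid hyy') hc
          exact ⟨y', hyy', by rw [if_pos hc']; omega⟩
      · intro y _
        by_cases hc : c y = 0
        · obtain ⟨y', hyy', hpos⟩ := keyT (p u) y
          have hc' : ¬ c y' = 0 := fin2 _ _ (c.valid hyy') hc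
          exact ⟨y', hyy', by rw [if_neg hc']; omega⟩
        · obtain ⟨y', hyy', hpos⟩ := keyT u y
          have hc' : c y' = 0 := fin2' _ _ (c.valid hyy') hc
          exact ⟨y', hyy', by rw [if_pos hc']; omega⟩
    have step2 : ∀ u ∈ S, trdn H ≤
        (∑ y, if c y = 0 then sF u y else 0) + (∑ y, if c y = 0 then 0 else sF (p u) y) := by
      intro u hu
      refine (step1 u hu).trans ?_
      rw [← Finset.sum_add_distrib]
      apply Finset.sum_le_sum
      intro y _
      by_cases hc : c y = 0 <;> simp [hc] <;> omega
    have hdisj : (↑S : Set V).PairwiseDisjoint (fun u => G.neighborFinset u) := by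
      intro a ha b hb hab
      have hd := hS a ha b hb hab
      simp only [Function.onFun]
      rw [Finset.disjoint_left]
      intro x hx1 hx2
      exact Set.disjoint_left.mp hd ((G.mem_neighborFinset a x).mp hx1)
        ((G.mem_neighborFinset b x).mp hx2)
    calc S.card * trdn H = ∑ _u ∈ S, trdn H := by rw [Finset.sum_const, smul_eq_mul]
      _ ≤ ∑ u ∈ S, ((∑ y, if c y = 0 then sF u y else 0)
            + (∑ y, if c y = 0 then 0 else sF (p u) y)) := Finset.sum_le_sum step2
      _ = (∑ u ∈ S, ∑ y, if c y = 0 then sF u y else 0)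
            + ∑ u ∈ S, ∑ y, if c y = 0 then 0 else sF (p u) y := Finset.sum_add_distrib
      _ = (∑ u ∈ S, ∑ y, if c y = 0 then sF u y else 0)
            + ∑ u ∈ S, ∑ y, if c y = 0 then 0 else sF u y := by
          congr 1
          refine Finset.sum_bij' (fun u _ => p u) (fun u _ => p u)
            (fun u hu => hpS u hu) (fun u hu => hpS u hu)
            (fun u hu => hpinv u hu) (fun u hu => hpinv u hu)
            (fun u hu => rfl)
      _ = ∑ u ∈ S, ∑ y, sF u y := by
          rw [← Finset.sum_add_distrib]
          refine Finset.sum_congr rfl fun u _ => ?_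
          rw [← Finset.sum_add_distrib]
          refine Finset.sum_congr rfl fun y _ => ?_
          split_ifs <;> omega
      _ = ∑ u ∈ S, ∑ x ∈ G.neighborFinset u, ∑ y, f (x, y) := by
          refine Finset.sum_congr rfl fun u _ => ?_
          rw [hsF]
          exact Finset.sum_comm
      _ = ∑ x ∈ S.biUnion (fun u => G.neighborFinset u), ∑ y, f (x, y) :=
          (Finset.sum_biUnion hdisj).symm
      _ ≤ ∑ x, ∑ y, f (x, y) :=
          Finset.sum_le_sum_of_subset (Finset.subset_univ _)
      _ = ∑ v : V × W, f v := (Fintype.sum_prod_type f).symm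
end

section
/- There are no graphs G and H without isolated vertices such that γ_tR(G × H) ∈ {1, 2, 3, 5}. -/
open Finset

private lemma le_sum2' {α : Type*} [Fintype α] [DecidableEq α] (f : α → ℕ) {a b : α}
    (hab : a ≠ b) : f a + f b ≤ ∑ v, f v := by
  rw [← Finset.sum_pair hab]
  exact Finset.sum_le_sum_of_subset (Finset.subset_univ _)

private lemma le_sum3' {α : Type*} [Fintype α] [DecidableEq α] (f : α → ℕ) {a b c : α}
    (hab : a ≠ b) (hac : a ≠ c) (hbc : b ≠ c) : f a + f b + f c ≤ ∑ v, f v := by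
  have h : ∑ v ∈ ({a, b, c} : Finset α), f v = f a + f b + f c := by
    rw [Finset.sum_insert (by simp [hab, hac]), Finset.sum_pair hbc]
    ring
  rw [← h]
  exact Finset.sum_le_sum_of_subset (Finset.subset_univ _)

private lemma le_sum4' {α : Type*} [Fintype α] [DecidableEq α] (f : α → ℕ) {a b c d : α}
    (hab : a ≠ b) (hac : a ≠ c) (had : a ≠ d) (hbc : b ≠ c) (hbd : b ≠ d) (hcd : c ≠ d) :
    f a + f b + f c + f d ≤ ∑ v, f v := by
  have h : ∑ v ∈ ({a, b, c, d} : Finset α), f v = f a + f b + f c + f d := by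
    rw [Finset.sum_insert (by simp [hab, hac, had]),
      Finset.sum_insert (by simp [hbc, hbd]), Finset.sum_pair hcd]
    ring
  rw [← h]
  exact Finset.sum_le_sum_of_subset (Finset.subset_univ _)

private lemma le_sum5' {α : Type*} [Fintype α] [DecidableEq α] (f : α → ℕ) {a b c d e : α}
    (hab : a ≠ b) (hac : a ≠ c) (had : a ≠ d) (hae : a ≠ e)
    (hbc : b ≠ c) (hbd : b ≠ d) (hbe : b ≠ e) (hcd : c ≠ d) (hce : c ≠ e) (hde : d ≠ e) :
    f a + f b + f c + f d + f e ≤ ∑ v, f v := by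
  have h : ∑ v ∈ ({a, b, c, d, e} : Finset α), f v = f a + f b + f c + f d + f e := by
    rw [Finset.sum_insert (by simp [hab, hac, had, hae]),
      Finset.sum_insert (by simp [hbc, hbd, hbe]),
      Finset.sum_insert (by simp [hcd, hce]), Finset.sum_pair hde]
    ring
  rw [← h]
  exact Finset.sum_le_sum_of_subset (Finset.subset_univ _)

theorem stmt_12 {V W : Type*} [Fintype V] [Fintype W]
    (G : SimpleGraph V) (H : SimpleGraph W)
    (hG : NoIsolated G) (hH : NoIsolated H) :
    trdn (dirProd G H) ∉ ({1, 2, 3, 5} : Set ℕ) := by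
  classical
  intro hmem
  have hNI : NoIsolated (dirProd G H) := by
    rintro ⟨v, w⟩
    obtain ⟨u, hu⟩ := hG v
    obtain ⟨x, hx⟩ := hH w
    exact ⟨(u, x), hu, hx⟩
  have hne : {w | ∃ f : V × W → ℕ, IsTRDF (dirProd G H) f ∧ ∑ v, f v = w}.Nonempty := by
    refine ⟨∑ _v : V × W, (2 : ℕ), fun _ => 2,
      ⟨fun v => le_refl 2, fun v h => by simp at h, fun v _ => ?_⟩, rfl⟩
    obtain ⟨u, hu⟩ := hNI v
    exact ⟨u, hu, by simp⟩
  obtain ⟨f, hf, hsum⟩ : ∃ f : V × W → ℕ, IsTRDF (dirProd G H) f ∧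
      ∑ v, f v = trdn (dirProd G H) := Nat.sInf_mem hne
  obtain ⟨hle2, hzero, hpos⟩ := hf
  simp only [Set.mem_insert_iff, Set.mem_singleton_iff] at hmem
  have hsum5 : ∑ v, f v = 1 ∨ ∑ v, f v = 2 ∨ ∑ v, f v = 3 ∨ ∑ v, f v = 5 := by
    rcases hmem with h | h | h | h <;> omega
  have hVW : Nonempty (V × W) := by
    by_contra h
    rw [not_nonempty_iff] at h
    haveI := h
    rw [Finset.univ_eq_empty, Finset.sum_empty] at hsum5
    omega
  obtain ⟨a, b, hab, hfa, hfb⟩ : ∃ a b, (dirProd G H).Adj a b ∧ 0 < f a ∧ 0 < f b := by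
    obtain ⟨v⟩ := hVW
    by_cases hv : 0 < f v
    · obtain ⟨u, h1, h2⟩ := hpos v hv
      exact ⟨v, u, h1, hv, h2⟩
    · obtain ⟨u, h1, h2⟩ := hzero v (by omega)
      obtain ⟨w, h3, h4⟩ := hpos u (by omega)
      exact ⟨u, w, h3, by omega, h4⟩
  have hGab : G.Adj a.1 b.1 := hab.1
  have hHab : H.Adj a.2 b.2 := hab.2
  have habne : a ≠ b := hab.ne
  rcases hsum5 with h1 | h2 | h3 | h5
  · -- weight 1 is impossible
    have := le_sum2' f habne
    omega
  · -- weight 2 is impossible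
    have hab2 := le_sum2' f habne
    have no2 : ∀ u, f u ≠ 2 := by
      intro u hu
      by_cases h : u = a
      · rw [h] at hu; omega
      by_cases h' : u = b
      · rw [h'] at hu; omega
      have := le_sum3' f habne (fun hh => h hh.symm) (fun hh => h' hh.symm)
      omega
    have hxa : ((a.1, b.2) : V × W) ≠ a := fun h => absurd (congrArg Prod.snd h) hHab.ne'
    have hxb : ((a.1, b.2) : V × W) ≠ b := fun h => absurd (congrArg Prod.fst h) hGab.ne
    have hfx : f (a.1, b.2) = 0 := by
      by_contra h
      have := le_sum3' f habne (Ne.symm hxa) (Ne.symm hxb)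
      omega
    obtain ⟨s, hs1, hs2⟩ := hzero (a.1, b.2) hfx
    exact no2 s hs2
  · -- weight 3 is impossible
    by_cases h2 : ∃ u, f u = 2
    · obtain ⟨u, hu⟩ := h2
      obtain ⟨w, huw, hw⟩ := hpos u (by omega)
      have hwu : u ≠ w := huw.ne
      have hsum2 := le_sum2' f hwu
      have only2 : ∀ t, f t = 2 → t = u := by
        intro t ht
        by_contra hne'
        by_cases htw : t = w
        · rw [htw] at ht; omega
        · have := le_sum3' f hwu (Ne.symm hne') (Ne.symm htw)
          omega
      have hxu : ((u.1, w.2) : V × W) ≠ u := fun h => absurd (congrArg Prod.snd h) huw.2.ne'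
      have hxw : ((u.1, w.2) : V × W) ≠ w := fun h => absurd (congrArg Prod.fst h) huw.1.ne
      have hfx : f (u.1, w.2) = 0 := by
        by_contra h
        have := le_sum3' f hwu (Ne.symm hxu) (Ne.symm hxw)
        omega
      obtain ⟨s, hs1, hs2⟩ := hzero (u.1, w.2) hfx
      rw [only2 s hs2] at hs1
      exact G.loopless.irrefl _ hs1.1
    · push_neg at h2
      have posx : 0 < f (a.1, b.2) := by
        rcases Nat.eq_zero_or_pos (f (a.1, b.2)) with h | h
        · obtain ⟨s, _, hs2⟩ := hzero _ h
          exact absurd hs2 (h2 s)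
        · exact h
      have posy : 0 < f (b.1, a.2) := by
        rcases Nat.eq_zero_or_pos (f (b.1, a.2)) with h | h
        · obtain ⟨s, _, hs2⟩ := hzero _ h
          exact absurd hs2 (h2 s)
        · exact h
      have hax : a ≠ ((a.1, b.2) : V × W) := fun h => absurd (congrArg Prod.snd h) hHab.ne
      have hay : a ≠ ((b.1, a.2) : V × W) := fun h => absurd (congrArg Prod.fst h) hGab.ne
      have hbx : b ≠ ((a.1, b.2) : V × W) := fun h => absurd (congrArg Prod.fst h) hGab.ne'
      have hby : b ≠ ((b.1, a.2) : V × W) := fun h => absurd (congrArg Prod.snd h) hHab.ne'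
      have hxy : ((a.1, b.2) : V × W) ≠ ((b.1, a.2) : V × W) :=
        fun h => absurd (congrArg Prod.fst h) hGab.ne
      have := le_sum4' f habne hax hay hbx hby hxy
      omega
  · -- weight 5 is impossible
    by_cases h2 : ∃ u, f u = 2
    · obtain ⟨u, hu2⟩ := h2
      by_cases h22 : ∃ t, t ≠ u ∧ f t = 2
      · -- two vertices with label 2
        obtain ⟨t, htu, ht2⟩ := h22
        obtain ⟨c, hcu, hct, hfc⟩ : ∃ c, c ≠ u ∧ c ≠ t ∧ 0 < f c := by
          by_contra hno
          push_neg at hno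
          have heq : ∑ v, f v = ∑ v ∈ ({u, t} : Finset (V × W)), f v := by
            refine (Finset.sum_subset (Finset.subset_univ _) ?_).symm
            intro d _ hd
            simp only [Finset.mem_insert, Finset.mem_singleton] at hd
            push_neg at hd
            have := hno d hd.1 hd.2
            omega
          rw [Finset.sum_pair (Ne.symm htu)] at heq
          omega
        have hfc1 : f c = 1 := by
          have := le_sum3' f (Ne.symm htu) (Ne.symm hcu) (Ne.symm hct)
          omega
        have zero4 : ∀ d, d ≠ u → d ≠ t → d ≠ c → f d = 0 := by
          intro d hd1 hd2 hd3
          have := le_sum4' f (Ne.symm htu) (Ne.symm hcu) (Ne.symm hd1)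
            (Ne.symm hct) (Ne.symm hd2) (Ne.symm hd3)
          omega
        have two2 : ∀ s, f s = 2 → s = u ∨ s = t := by
          intro s hs
          by_contra hcon
          push_neg at hcon
          by_cases hsc : s = c
          · rw [hsc] at hs; omega
          · have := zero4 s hcon.1 hcon.2 hsc; omega
        have pos3 : ∀ s, 0 < f s → s = u ∨ s = t ∨ s = c := by
          intro s hs
          by_contra hcon
          push_neg at hcon
          have := zero4 s hcon.1 hcon.2.1 hcon.2.2
          omega
        by_cases hco1 : u.1 = t.1
        · -- u and t share first coordinate; c must be adjacent to both
          have hAuc : (dirProd G H).Adj u c := by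
            obtain ⟨w, hw1, hw2⟩ := hpos u (by omega)
            rcases pos3 w hw2 with h | h | h
            · rw [h] at hw1
              exact absurd hw1 ((dirProd G H).loopless.irrefl _)
            · rw [h] at hw1
              have h' : G.Adj u.1 t.1 := hw1.1
              rw [hco1] at h'
              exact absurd h' (G.loopless.irrefl _)
            · rw [h] at hw1
              exact hw1
          have hAtc : (dirProd G H).Adj t c := by
            obtain ⟨w, hw1, hw2⟩ := hpos t (by omega)
            rcases pos3 w hw2 with h | h | h
            · rw [h] at hw1
              have h' : G.Adj t.1 u.1 := hw1.1
              rw [hco1] at h'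
              exact absurd h' (G.loopless.irrefl _)
            · rw [h] at hw1
              exact absurd hw1 ((dirProd G H).loopless.irrefl _)
            · rw [h] at hw1
              exact hw1
          have hposz : 0 < f (u.1, c.2) := by
            rcases Nat.eq_zero_or_pos (f (u.1, c.2)) with h | h
            · obtain ⟨s, hs1, hs2⟩ := hzero _ h
              rcases two2 s hs2 with h'' | h''
              · rw [h''] at hs1
                exact absurd hs1.1 (G.loopless.irrefl _)
              · rw [h''] at hs1
                have h' : G.Adj u.1 t.1 := hs1.1
                rw [hco1] at h'
                exact absurd h' (G.loopless.irrefl _)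
            · exact h
          rcases pos3 _ hposz with hz | hz | hz
          · exact absurd (congrArg Prod.snd hz) hAuc.2.ne'
          · exact absurd (congrArg Prod.snd hz) hAtc.2.ne'
          · exact absurd (congrArg Prod.fst hz) hAuc.1.ne
        · by_cases hco2 : u.2 = t.2
          · -- u and t share second coordinate
            have hAuc : (dirProd G H).Adj u c := by
              obtain ⟨w, hw1, hw2⟩ := hpos u (by omega)
              rcases pos3 w hw2 with h | h | h
              · rw [h] at hw1
                exact absurd hw1 ((dirProd G H).loopless.irrefl _)
              · rw [h] at hw1
                have h' : H.Adj u.2 t.2 := hw1.2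
                rw [hco2] at h'
                exact absurd h' (H.loopless.irrefl _)
              · rw [h] at hw1
                exact hw1
            have hAtc : (dirProd G H).Adj t c := by
              obtain ⟨w, hw1, hw2⟩ := hpos t (by omega)
              rcases pos3 w hw2 with h | h | h
              · rw [h] at hw1
                have h' : H.Adj t.2 u.2 := hw1.2
                rw [hco2] at h'
                exact absurd h' (H.loopless.irrefl _)
              · rw [h] at hw1
                exact absurd hw1 ((dirProd G H).loopless.irrefl _)
              · rw [h] at hw1
                exact hw1
            have hposz : 0 < f (c.1, u.2) := by
              rcases Nat.eq_zero_or_pos (f (c.1, u.2)) with h | h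
              · obtain ⟨s, hs1, hs2⟩ := hzero _ h
                rcases two2 s hs2 with h'' | h''
                · rw [h''] at hs1
                  exact absurd hs1.2 (H.loopless.irrefl _)
                · rw [h''] at hs1
                  have h' : H.Adj u.2 t.2 := hs1.2
                  rw [hco2] at h'
                  exact absurd h' (H.loopless.irrefl _)
              · exact h
            rcases pos3 _ hposz with hz | hz | hz
            · exact absurd (congrArg Prod.fst hz) hAuc.1.ne'
            · exact absurd (congrArg Prod.fst hz) hAtc.1.ne'
            · exact absurd (congrArg Prod.snd hz) hAuc.2.ne
          · -- u, t differ in both coordinates: two cross vertices, both forced to be c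
            have hxu : ((u.1, t.2) : V × W) ≠ u :=
              fun h => absurd (congrArg Prod.snd h) (fun hh => hco2 hh.symm)
            have hxt : ((u.1, t.2) : V × W) ≠ t :=
              fun h => absurd (congrArg Prod.fst h) hco1
            have hyu : ((t.1, u.2) : V × W) ≠ u :=
              fun h => absurd (congrArg Prod.fst h) (fun hh => hco1 hh.symm)
            have hyt : ((t.1, u.2) : V × W) ≠ t :=
              fun h => absurd (congrArg Prod.snd h) hco2
            have hxy : ((u.1, t.2) : V × W) ≠ ((t.1, u.2) : V × W) :=
              fun h => absurd (congrArg Prod.fst h) hco1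
            have hxc : ((u.1, t.2) : V × W) = c := by
              have posx : 0 < f (u.1, t.2) := by
                rcases Nat.eq_zero_or_pos (f (u.1, t.2)) with h | h
                · obtain ⟨s, hs1, hs2⟩ := hzero _ h
                  rcases two2 s hs2 with h'' | h''
                  · rw [h''] at hs1
                    exact absurd hs1.1 (G.loopless.irrefl _)
                  · rw [h''] at hs1
                    exact absurd hs1.2 (H.loopless.irrefl _)
                · exact h
              rcases pos3 _ posx with h | h | h
              · exact absurd h hxu
              · exact absurd h hxt
              · exact h
            have hyc : ((t.1, u.2) : V × W) = c := by
              have posy : 0 < f (t.1, u.2) := by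
                rcases Nat.eq_zero_or_pos (f (t.1, u.2)) with h | h
                · obtain ⟨s, hs1, hs2⟩ := hzero _ h
                  rcases two2 s hs2 with h'' | h''
                  · rw [h''] at hs1
                    exact absurd hs1.2 (H.loopless.irrefl _)
                  · rw [h''] at hs1
                    exact absurd hs1.1 (G.loopless.irrefl _)
                · exact h
              rcases pos3 _ posy with h | h | h
              · exact absurd h hyu
              · exact absurd h hyt
              · exact h
            exact hxy (hxc.trans hyc.symm)
      · -- exactly one vertex with label 2
        push_neg at h22
        have only2 : ∀ s, f s = 2 → s = u := by
          intro s hs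
          by_contra h
          exact h22 s h hs
        obtain ⟨b', hub', hb'⟩ := hpos u (by omega)
        have hbu : b' ≠ u := hub'.ne'
        have hfb' : f b' = 1 := by
          have h1 := hle2 b'
          have h2' := h22 b' hbu
          omega
        have hxu : ((u.1, b'.2) : V × W) ≠ u :=
          fun h => absurd (congrArg Prod.snd h) hub'.2.ne'
        have hyu : ((b'.1, u.2) : V × W) ≠ u :=
          fun h => absurd (congrArg Prod.fst h) hub'.1.ne'
        have hxb : ((u.1, b'.2) : V × W) ≠ b' :=
          fun h => absurd (congrArg Prod.fst h) hub'.1.ne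
        have hyb : ((b'.1, u.2) : V × W) ≠ b' :=
          fun h => absurd (congrArg Prod.snd h) hub'.2.ne
        have hxy : ((u.1, b'.2) : V × W) ≠ ((b'.1, u.2) : V × W) :=
          fun h => absurd (congrArg Prod.fst h) hub'.1.ne
        have posx : 0 < f (u.1, b'.2) := by
          rcases Nat.eq_zero_or_pos (f (u.1, b'.2)) with h | h
          · obtain ⟨s, hs1, hs2⟩ := hzero _ h
            rw [only2 s hs2] at hs1
            exact absurd hs1.1 (G.loopless.irrefl _)
          · exact h
        have posy : 0 < f (b'.1, u.2) := by
          rcases Nat.eq_zero_or_pos (f (b'.1, u.2)) with h | h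
          · obtain ⟨s, hs1, hs2⟩ := hzero _ h
            rw [only2 s hs2] at hs1
            exact absurd hs1.2 (H.loopless.irrefl _)
          · exact h
        have hfx1 : f (u.1, b'.2) = 1 := by
          have ha := hle2 ((u.1, b'.2) : V × W)
          have hb := h22 _ hxu
          omega
        have hfy1 : f (b'.1, u.2) = 1 := by
          have ha := hle2 ((b'.1, u.2) : V × W)
          have hb := h22 _ hyu
          omega
        have hzero4 : ∀ d : V × W, d ≠ u → d ≠ b' → d ≠ (u.1, b'.2) → d ≠ (b'.1, u.2) →
            f d = 0 := by
          intro d hd1 hd2 hd3 hd4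
          have := le_sum5' f (Ne.symm hbu) (Ne.symm hxu) (Ne.symm hyu) (Ne.symm hd1)
            (Ne.symm hxb) (Ne.symm hyb) (Ne.symm hd2) hxy (Ne.symm hd3) (Ne.symm hd4)
          omega
        have hW2 : ∀ w : W, w = u.2 ∨ w = b'.2 := by
          intro w
          by_contra hw
          push_neg at hw
          have hz0 : f (u.1, w) = 0 := by
            refine hzero4 _ ?_ ?_ ?_ ?_
            · exact fun h => absurd (congrArg Prod.snd h) hw.1
            · exact fun h => absurd (congrArg Prod.fst h) hub'.1.ne
            · exact fun h => absurd (congrArg Prod.snd h) hw.2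
            · exact fun h => absurd (congrArg Prod.fst h) hub'.1.ne
          obtain ⟨s, hs1, hs2⟩ := hzero (u.1, w) hz0
          rw [only2 s hs2] at hs1
          exact absurd hs1.1 (G.loopless.irrefl _)
        have hV2 : ∀ v : V, v = u.1 ∨ v = b'.1 := by
          intro v
          by_contra hv
          push_neg at hv
          have hz0 : f (v, u.2) = 0 := by
            refine hzero4 _ ?_ ?_ ?_ ?_
            · exact fun h => absurd (congrArg Prod.fst h) hv.1
            · exact fun h => absurd (congrArg Prod.snd h) hub'.2.ne
            · exact fun h => absurd (congrArg Prod.snd h) hub'.2.ne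
            · exact fun h => absurd (congrArg Prod.fst h) hv.2
          obtain ⟨s, hs1, hs2⟩ := hzero (v, u.2) hz0
          rw [only2 s hs2] at hs1
          exact absurd hs1.2 (H.loopless.irrefl _)
        have hcV : Fintype.card V ≤ 2 := by
          have hsub : (Finset.univ : Finset V) ⊆ {u.1, b'.1} := by
            intro v _
            simp only [Finset.mem_insert, Finset.mem_singleton]
            exact hV2 v
          calc Fintype.card V = (Finset.univ : Finset V).card := Finset.card_univ.symm
            _ ≤ ({u.1, b'.1} : Finset V).card := Finset.card_le_card hsub
            _ ≤ 2 := le_trans (Finset.card_insert_le _ _) (by simp)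
        have hcW : Fintype.card W ≤ 2 := by
          have hsub : (Finset.univ : Finset W) ⊆ {u.2, b'.2} := by
            intro w _
            simp only [Finset.mem_insert, Finset.mem_singleton]
            exact hW2 w
          calc Fintype.card W = (Finset.univ : Finset W).card := Finset.card_univ.symm
            _ ≤ ({u.2, b'.2} : Finset W).card := Finset.card_le_card hsub
            _ ≤ 2 := le_trans (Finset.card_insert_le _ _) (by simp)
        have hle4 : trdn (dirProd G H) ≤ Fintype.card (V × W) := by
          refine Nat.sInf_le ⟨fun _ => 1,
            ⟨fun v => by simp, fun v h => by simp at h, fun v _ => ?_⟩, by simp⟩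
          obtain ⟨s, hs⟩ := hNI v
          exact ⟨s, hs, by simp⟩
        have hcard : Fintype.card (V × W) = Fintype.card V * Fintype.card W :=
          Fintype.card_prod V W
        have h4 : Fintype.card V * Fintype.card W ≤ 4 := by
          calc Fintype.card V * Fintype.card W ≤ 2 * 2 := Nat.mul_le_mul hcV hcW
            _ = 4 := by norm_num
        omega
    · -- no vertex with label 2: all labels are 1
      push_neg at h2
      have hall1 : ∀ v : V × W, f v = 1 := by
        intro v
        rcases Nat.eq_zero_or_pos (f v) with h | h
        · obtain ⟨s, _, hs2⟩ := hzero v h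
          exact absurd hs2 (h2 s)
        · have ha := hle2 v
          have hb := h2 v
          omega
      have hcard : ∑ v : V × W, f v = Fintype.card (V × W) := by
        simp [hall1, Finset.card_univ]
      have h5' : Fintype.card V * Fintype.card W = 5 := by
        rw [hcard, Fintype.card_prod] at h5
        exact h5
      have hVge : 2 ≤ Fintype.card V := Fintype.one_lt_card_iff.mpr ⟨a.1, b.1, hGab.ne⟩
      have hWge : 2 ≤ Fintype.card W := Fintype.one_lt_card_iff.mpr ⟨a.2, b.2, hHab.ne⟩
      have hle : 2 * Fintype.card W ≤ 5 := by
        calc 2 * Fintype.card W ≤ Fintype.card V * Fintype.card W :=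
          Nat.mul_le_mul_right _ hVge
          _ = 5 := h5'
      have hWeq : Fintype.card W = 2 := by omega
      rw [hWeq] at h5'
      omega
end

section
/- If G and H are triangle centered graphs, then γ_tR(G × H) ≤ 6. -/
open Finset

/-- A graph is triangle centered if it has a triangle such that every vertex is
adjacent to at least two of its vertices. -/
def TriangleCentered {V : Type*} (G : SimpleGraph V) : Prop :=
  ∃ x y z : V, G.Adj x y ∧ G.Adj y z ∧ G.Adj x z ∧
    ∀ v : V, (G.Adj v x ∧ G.Adj v y) ∨ (G.Adj v y ∧ G.Adj v z) ∨ (G.Adj v x ∧ G.Adj v z)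

/-- A universal vertex is adjacent to all other vertices. -/
def IsUniversalVertex {V : Type*} (G : SimpleGraph V) (v : V) : Prop :=
  ∀ u, u ≠ v → G.Adj v u

theorem stmt_14 {V W : Type*} [Fintype V] [Fintype W]
    (G : SimpleGraph V) (H : SimpleGraph W)
    (hG : TriangleCentered G) (hH : TriangleCentered H) :
    trdn (dirProd G H) ≤ 6 := by
  classical
  obtain ⟨x, y, z, hxy, hyz, hxz, hGall⟩ := hG
  obtain ⟨a, b, c, hab, hbc, hac, hHall⟩ := hH
  set S : Finset (V × W) := {(x, a), (y, b), (z, c)} with hS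
  set f : V × W → ℕ := fun p => if p ∈ S then 2 else 0 with hf
  have hmemS : ∀ p, p ∈ S ↔ p = (x, a) ∨ p = (y, b) ∨ p = (z, c) := by
    intro p; simp [hS]
  apply Nat.sInf_le
  refine ⟨f, ⟨?_, ?_, ?_⟩, ?_⟩
  · intro v; by_cases h : v ∈ S <;> simp [hf, h]
  · intro v hv
    by_contra hcon
    push_neg at hcon
    have key : ∃ p ∈ S, (dirProd G H).Adj v p := by
      rcases hGall v.1 with ⟨h1, h2⟩ | ⟨h1, h2⟩ | ⟨h1, h2⟩ <;>
        rcases hHall v.2 with ⟨k1, k2⟩ | ⟨k1, k2⟩ | ⟨k1, k2⟩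
      · exact ⟨(x, a), by simp [hmemS], h1, k1⟩
      · exact ⟨(y, b), by simp [hmemS], h2, k1⟩
      · exact ⟨(x, a), by simp [hmemS], h1, k1⟩
      · exact ⟨(y, b), by simp [hmemS], h1, k2⟩
      · exact ⟨(y, b), by simp [hmemS], h1, k1⟩
      · exact ⟨(z, c), by simp [hmemS], h2, k2⟩
      · exact ⟨(x, a), by simp [hmemS], h1, k1⟩
      · exact ⟨(z, c), by simp [hmemS], h2, k2⟩
      · exact ⟨(x, a), by simp [hmemS], h1, k1⟩
    obtain ⟨p, hp, hadj⟩ := key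
    exact absurd (hcon p hadj) (by simp [hf, hp])
  · intro v hv
    have hvS : v ∈ S := by
      by_contra h; simp [hf, h] at hv
    rcases (hmemS v).1 hvS with h | h | h
    · exact ⟨(y, b), by rw [h]; exact ⟨hxy, hab⟩, by simp [hf, hmemS]⟩
    · exact ⟨(z, c), by rw [h]; exact ⟨hyz, hbc⟩, by simp [hf, hmemS]⟩
    · exact ⟨(x, a), by rw [h]; exact ⟨hxz.symm, hac.symm⟩, by simp [hf, hmemS]⟩
  · have hcard : S.card = 3 := by
      rw [hS]
      rw [Finset.card_insert_of_notMem, Finset.card_insert_of_notMem,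
        Finset.card_singleton]
      · simp only [Finset.mem_singleton]
        exact fun h => hyz.ne (congrArg Prod.fst h)
      · simp only [Finset.mem_insert, Finset.mem_singleton]
        push_neg
        exact ⟨fun h => hxy.ne (congrArg Prod.fst h),
          fun h => hxz.ne (congrArg Prod.fst h)⟩
    calc ∑ v, f v = ∑ v ∈ S, 2 := by
          rw [hf]
          rw [Finset.sum_ite_mem, Finset.univ_inter]
      _ = 6 := by rw [Finset.sum_const, hcard]; rfl
end

section
/- For stars K_{1,s} and K_{1,t} with s, t ≥ 2, the total Roman domination number of their direct product satisfies γ_tR(K_{1,s} × K_{1,t}) = 7. -/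
open Finset

/-- The star `K_{1,s}`: the center `0` is adjacent to the `s` leaves. -/
def starGraph (s : ℕ) : SimpleGraph (Fin (s + 1)) where
  Adj i j := (i = 0 ∧ j ≠ 0) ∨ (j = 0 ∧ i ≠ 0)
  symm := ⟨fun i j h => h.elim (fun h => Or.inr h) (fun h => Or.inl h)⟩
  loopless := ⟨fun i h => h.elim (fun h => h.2 h.1) (fun h => h.2 h.1)⟩

lemma prod_adj (s t : ℕ) (p q : Fin (s+1) × Fin (t+1)) :
    (dirProd (starGraph s) (starGraph t)).Adj p q ↔
      ((p.1 = 0 ∧ q.1 ≠ 0) ∨ (q.1 = 0 ∧ p.1 ≠ 0)) ∧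
      ((p.2 = 0 ∧ q.2 ≠ 0) ∨ (q.2 = 0 ∧ p.2 ≠ 0)) := Iff.rfl


lemma pair_le_sum {α : Type*} [DecidableEq α] {S : Finset α} {f : α → ℕ} {q q' : α}
    (hq : q ∈ S) (hq' : q' ∈ S) (hne : q ≠ q') : f q + f q' ≤ ∑ v ∈ S, f v := by
  have hsub : ({q, q'} : Finset α) ⊆ S := by
    intro x hx; simp only [Finset.mem_insert, Finset.mem_singleton] at hx
    rcases hx with h | h <;> subst h <;> assumption
  calc f q + f q' = ∑ v ∈ ({q, q'} : Finset α), f v := (Finset.sum_pair hne).symm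
    _ ≤ ∑ v ∈ S, f v := Finset.sum_le_sum_of_subset hsub

lemma triple_le_sum {α : Type*} [DecidableEq α] {S : Finset α} {f : α → ℕ} {q1 q2 q3 : α}
    (h1 : q1 ∈ S) (h2 : q2 ∈ S) (h3 : q3 ∈ S)
    (h12 : q1 ≠ q2) (h13 : q1 ≠ q3) (h23 : q2 ≠ q3) :
    f q1 + f q2 + f q3 ≤ ∑ v ∈ S, f v := by
  have hsub : ({q1, q2, q3} : Finset α) ⊆ S := by
    intro x hx; simp only [Finset.mem_insert, Finset.mem_singleton] at hx
    rcases hx with h | h | h <;> subst h <;> assumption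
  have : ∑ v ∈ ({q1, q2, q3} : Finset α), f v = f q1 + f q2 + f q3 := by
    rw [Finset.sum_insert (by simp [h12, h13]), Finset.sum_pair h23]
    ring
  calc f q1 + f q2 + f q3 = ∑ v ∈ ({q1, q2, q3} : Finset α), f v := this.symm
    _ ≤ ∑ v ∈ S, f v := Finset.sum_le_sum_of_subset hsub

lemma upper (s t : ℕ) (hs : 2 ≤ s) (ht : 2 ≤ t) :
    ∃ f : Fin (s+1) × Fin (t+1) → ℕ,
      IsTRDF (dirProd (starGraph s) (starGraph t)) f ∧ ∑ v, f v = 7 := by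
  set x1 : Fin (s+1) := ⟨1, by omega⟩ with hx1d
  set y1 : Fin (t+1) := ⟨1, by omega⟩ with hy1d
  have hx1 : x1 ≠ 0 := by simp [hx1d, Fin.ext_iff]
  have hy1 : y1 ≠ 0 := by simp [hy1d, Fin.ext_iff]
  set a : Fin (s+1) × Fin (t+1) := (0, 0) with had
  set b : Fin (s+1) × Fin (t+1) := (x1, y1) with hbd
  set c : Fin (s+1) × Fin (t+1) := (0, y1) with hcd
  set d : Fin (s+1) × Fin (t+1) := (x1, 0) with hdd
  have hab : a ≠ b := by simp [had, hbd, Prod.ext_iff, hx1.symm]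
  have hac : a ≠ c := by simp [had, hcd, Prod.ext_iff, hy1.symm]
  have had' : a ≠ d := by simp [had, hdd, Prod.ext_iff, hx1.symm]
  have hbc : b ≠ c := by simp [hbd, hcd, Prod.ext_iff, hx1]
  have hbd' : b ≠ d := by simp [hbd, hdd, Prod.ext_iff, hy1]
  have hcd' : c ≠ d := by simp [hcd, hdd, Prod.ext_iff, hx1.symm]
  refine ⟨fun p => (if p = a then 2 else 0) + (if p = b then 1 else 0)
      + (if p = c then 2 else 0) + (if p = d then 2 else 0), ⟨?_, ?_, ?_⟩, ?_⟩
  · intro v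
    by_cases h1 : v = a
    · simp [h1, hab, hac, had']
    by_cases h2 : v = b
    · simp [h2, hab.symm, hbc, hbd']
    by_cases h3 : v = c
    · simp [h3, hac.symm, hbc.symm, hcd']
    by_cases h4 : v = d
    · simp [h4, had'.symm, hbd'.symm, hcd'.symm]
    simp [h1, h2, h3, h4]
  · rintro ⟨i, j⟩ hv
    by_cases hi : i = 0
    · by_cases hj : j = 0
      · exfalso
        have : ((i, j) : Fin (s+1) × Fin (t+1)) = a := by simp [had, hi, hj]
        rw [this] at hv
        simp [hab, hac, had'] at hv
      · -- i = 0, j ≠ 0 : neighbor d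
        refine ⟨d, ?_, ?_⟩
        · rw [prod_adj]
          exact ⟨Or.inl ⟨hi, hx1⟩, Or.inr ⟨rfl, hj⟩⟩
        · simp [had'.symm, hbd'.symm, hcd'.symm]
    · by_cases hj : j = 0
      · refine ⟨c, ?_, ?_⟩
        · rw [prod_adj]
          exact ⟨Or.inr ⟨rfl, hi⟩, Or.inl ⟨hj, hy1⟩⟩
        · simp [hac.symm, hbc.symm, hcd']
      · refine ⟨a, ?_, ?_⟩
        · rw [prod_adj]
          exact ⟨Or.inr ⟨rfl, hi⟩, Or.inr ⟨rfl, hj⟩⟩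
        · simp [hab, hac, had']
  · intro v hv
    by_cases h1 : v = a
    · refine ⟨b, ?_, ?_⟩
      · rw [h1, prod_adj]
        exact ⟨Or.inl ⟨rfl, hx1⟩, Or.inl ⟨rfl, hy1⟩⟩
      · simp [hab.symm, hbc, hbd']
    by_cases h2 : v = b
    · refine ⟨a, ?_, ?_⟩
      · rw [h2, prod_adj]
        exact ⟨Or.inr ⟨rfl, hx1⟩, Or.inr ⟨rfl, hy1⟩⟩
      · simp [hab, hac, had']
    by_cases h3 : v = c
    · refine ⟨d, ?_, ?_⟩
      · rw [h3, prod_adj]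
        exact ⟨Or.inl ⟨rfl, hx1⟩, Or.inr ⟨rfl, hy1⟩⟩
      · simp [had'.symm, hbd'.symm, hcd'.symm]
    by_cases h4 : v = d
    · refine ⟨c, ?_, ?_⟩
      · rw [h4, prod_adj]
        exact ⟨Or.inr ⟨rfl, hx1⟩, Or.inl ⟨rfl, hy1⟩⟩
      · simp [hac.symm, hbc.symm, hcd']
    · exfalso
      simp [h1, h2, h3, h4] at hv
  · rw [Finset.sum_add_distrib, Finset.sum_add_distrib, Finset.sum_add_distrib]
    simp [Finset.sum_ite_eq']

lemma lower (s t : ℕ) (hs : 2 ≤ s) (ht : 2 ≤ t)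
    (f : Fin (s+1) × Fin (t+1) → ℕ)
    (hf : IsTRDF (dirProd (starGraph s) (starGraph t)) f) : 7 ≤ ∑ v, f v := by
  classical
  obtain ⟨hle, h0, hpos⟩ := hf
  set x1 : Fin (s+1) := ⟨1, by omega⟩ with hx1d
  set x2 : Fin (s+1) := ⟨2, by omega⟩ with hx2d
  set y1 : Fin (t+1) := ⟨1, by omega⟩ with hy1d
  set y2 : Fin (t+1) := ⟨2, by omega⟩ with hy2d
  have hx1 : x1 ≠ 0 := by simp [hx1d, Fin.ext_iff]
  have hx2 : x2 ≠ 0 := by simp [hx2d, Fin.ext_iff]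
  have hy1 : y1 ≠ 0 := by simp [hy1d, Fin.ext_iff]
  have hy2 : y2 ≠ 0 := by simp [hy2d, Fin.ext_iff]
  have hx12 : x1 ≠ x2 := by simp [hx1d, hx2d, Fin.ext_iff]
  have hy12 : y1 ≠ y2 := by simp [hy1d, hy2d, Fin.ext_iff]
  set B : Finset (Fin (s+1) × Fin (t+1)) :=
    univ.filter (fun p => p.1 ≠ 0 ∧ p.2 ≠ 0) with hBd
  set C : Finset (Fin (s+1) × Fin (t+1)) :=
    univ.filter (fun p => p.1 = 0 ∧ p.2 ≠ 0) with hCd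
  set D : Finset (Fin (s+1) × Fin (t+1)) :=
    univ.filter (fun p => p.1 ≠ 0 ∧ p.2 = 0) with hDd
  have hmemB : ∀ p : Fin (s+1) × Fin (t+1), p ∈ B ↔ p.1 ≠ 0 ∧ p.2 ≠ 0 := by
    intro p; simp [hBd]
  have hmemC : ∀ p : Fin (s+1) × Fin (t+1), p ∈ C ↔ p.1 = 0 ∧ p.2 ≠ 0 := by
    intro p; simp [hCd]
  have hmemD : ∀ p : Fin (s+1) × Fin (t+1), p ∈ D ↔ p.1 ≠ 0 ∧ p.2 = 0 := by
    intro p; simp [hDd]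
  have adjc : ∀ {p u : Fin (s+1) × Fin (t+1)},
      (dirProd (starGraph s) (starGraph t)).Adj p u →
      (p.1 = 0 → u.1 ≠ 0) ∧ (p.1 ≠ 0 → u.1 = 0) ∧ (p.2 = 0 → u.2 ≠ 0) ∧ (p.2 ≠ 0 → u.2 = 0) := by
    intro p u h
    rw [prod_adj] at h
    obtain ⟨h1, h2⟩ := h
    refine ⟨fun hp => ?_, fun hp => ?_, fun hp => ?_, fun hp => ?_⟩
    · rcases h1 with ⟨_, h⟩ | ⟨_, h⟩
      · exact h
      · exact absurd hp h
    · rcases h1 with ⟨h', _⟩ | ⟨h', _⟩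
      · exact absurd h' hp
      · exact h'
    · rcases h2 with ⟨_, h⟩ | ⟨_, h⟩
      · exact h
      · exact absurd hp h
    · rcases h2 with ⟨h', _⟩ | ⟨h', _⟩
      · exact absurd h' hp
      · exact h'
  -- from a zero vertex in C get a 2-vertex in D, and vice versa
  have getD : ∀ q : Fin (s+1) × Fin (t+1), q.1 = 0 → q.2 ≠ 0 → f q = 0 →
      ∃ u ∈ D, f u = 2 := by
    intro q h1 h2 hq
    obtain ⟨u, hadj, hu⟩ := h0 q hq
    have hc := adjc hadj
    exact ⟨u, (hmemD u).2 ⟨hc.1 h1, hc.2.2.2 h2⟩, hu⟩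
  have getC : ∀ q : Fin (s+1) × Fin (t+1), q.1 ≠ 0 → q.2 = 0 → f q = 0 →
      ∃ u ∈ C, f u = 2 := by
    intro q h1 h2 hq
    obtain ⟨u, hadj, hu⟩ := h0 q hq
    have hc := adjc hadj
    exact ⟨u, (hmemC u).2 ⟨hc.2.1 h1, hc.2.2.1 h2⟩, hu⟩
  have posC : ∃ q ∈ C, 0 < f q := by
    by_contra hcon
    push_neg at hcon
    have hq0 : f (0, y1) = 0 := by
      have := hcon (0, y1) ((hmemC _).2 ⟨rfl, hy1⟩); omega
    obtain ⟨u, huD, hu2⟩ := getD (0, y1) rfl hy1 hq0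
    obtain ⟨w, hwadj, hwpos⟩ := hpos u (by omega)
    have hc := adjc hwadj
    rw [hmemD] at huD
    have hwC : w ∈ C := (hmemC w).2 ⟨hc.2.1 huD.1, hc.2.2.1 huD.2⟩
    have := hcon w hwC
    omega
  have posD : ∃ q ∈ D, 0 < f q := by
    by_contra hcon
    push_neg at hcon
    have hq0 : f (x1, 0) = 0 := by
      have := hcon (x1, 0) ((hmemD _).2 ⟨hx1, rfl⟩); omega
    obtain ⟨u, huC, hu2⟩ := getC (x1, 0) hx1 rfl hq0
    obtain ⟨w, hwadj, hwpos⟩ := hpos u (by omega)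
    have hc := adjc hwadj
    rw [hmemC] at huC
    have hwD : w ∈ D := (hmemD w).2 ⟨hc.1 huC.1, hc.2.2.2 huC.2⟩
    have := hcon w hwD
    omega
  -- sum decomposition
  have hnotin : ((0,0) : Fin (s+1) × Fin (t+1)) ∉ B := by simp [hBd]
  have hdisjCD : Disjoint C D := by
    rw [Finset.disjoint_left]
    intro p hp hp'
    rw [hmemC] at hp; rw [hmemD] at hp'
    exact hp'.1 hp.1
  have hdisj : Disjoint (insert ((0,0) : Fin (s+1) × Fin (t+1)) B) (C ∪ D) := by
    rw [Finset.disjoint_left]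
    intro p hp hp'
    rw [Finset.mem_insert, hmemB] at hp
    rw [Finset.mem_union, hmemC, hmemD] at hp'
    rcases hp with h | h
    · subst h; rcases hp' with h' | h' <;> simp at h'
    · rcases hp' with h' | h'
      · exact h.1 h'.1
      · exact h.2 h'.2
  have hsub : insert ((0,0) : Fin (s+1) × Fin (t+1)) B ∪ (C ∪ D) ⊆ univ := by
    intro p _; exact mem_univ p
  have hsplit : ∑ v ∈ insert ((0,0) : Fin (s+1) × Fin (t+1)) B ∪ (C ∪ D), f v =
      (f (0,0) + ∑ v ∈ B, f v) + (∑ v ∈ C, f v + ∑ v ∈ D, f v) := by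
    rw [Finset.sum_union hdisj, Finset.sum_insert hnotin, Finset.sum_union hdisjCD]
  have htot : (f (0,0) + ∑ v ∈ B, f v) + (∑ v ∈ C, f v + ∑ v ∈ D, f v) ≤ ∑ v, f v := by
    rw [← hsplit]
    exact Finset.sum_le_sum_of_subset hsub
  -- Part 1 : star component
  have part1 : 3 ≤ f (0,0) + ∑ v ∈ B, f v := by
    by_cases hB : ∃ p ∈ B, f p = 0
    · obtain ⟨p, hpB, hp0⟩ := hB
      rw [hmemB] at hpB
      obtain ⟨u, hadj, hu2⟩ := h0 p hp0
      have hc := adjc hadj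
      have hue : u = ((0,0) : Fin (s+1) × Fin (t+1)) :=
        Prod.ext (hc.2.1 hpB.1) (hc.2.2.2 hpB.2)
      rw [hue] at hu2
      obtain ⟨w, hwadj, hwpos⟩ := hpos (0,0) (by omega)
      have hc' := adjc hwadj
      have hwB : w ∈ B := (hmemB w).2 ⟨hc'.1 rfl, hc'.2.2.1 rfl⟩
      have hle' : f w ≤ ∑ v ∈ B, f v :=
        Finset.single_le_sum (fun i _ => Nat.zero_le _) hwB
      omega
    · push_neg at hB
      have m1 : ((x1, y1) : Fin (s+1) × Fin (t+1)) ∈ B := (hmemB _).2 ⟨hx1, hy1⟩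
      have m2 : ((x2, y1) : Fin (s+1) × Fin (t+1)) ∈ B := (hmemB _).2 ⟨hx2, hy1⟩
      have m3 : ((x1, y2) : Fin (s+1) × Fin (t+1)) ∈ B := (hmemB _).2 ⟨hx1, hy2⟩
      have h1 := hB _ m1
      have h2 := hB _ m2
      have h3 := hB _ m3
      have htriple := triple_le_sum (f := f) m1 m2 m3
        (by simp [Prod.ext_iff, hx12]) (by simp [Prod.ext_iff, hy12])
        (by simp [Prod.ext_iff, hx12.symm])
      omega
  -- Part 2 : complete bipartite component
  have part2 : 4 ≤ ∑ v ∈ C, f v + ∑ v ∈ D, f v := by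
    obtain ⟨qc, hqcC, hqcpos⟩ := posC
    obtain ⟨qd, hqdD, hqdpos⟩ := posD
    have hqcle : f qc ≤ ∑ v ∈ C, f v :=
      Finset.single_le_sum (fun i _ => Nat.zero_le _) hqcC
    have hqdle : f qd ≤ ∑ v ∈ D, f v :=
      Finset.single_le_sum (fun i _ => Nat.zero_le _) hqdD
    have mD1 : ((x1, 0) : Fin (s+1) × Fin (t+1)) ∈ D := (hmemD _).2 ⟨hx1, rfl⟩
    have mD2 : ((x2, 0) : Fin (s+1) × Fin (t+1)) ∈ D := (hmemD _).2 ⟨hx2, rfl⟩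
    have mC1 : ((0, y1) : Fin (s+1) × Fin (t+1)) ∈ C := (hmemC _).2 ⟨rfl, hy1⟩
    have mC2 : ((0, y2) : Fin (s+1) × Fin (t+1)) ∈ C := (hmemC _).2 ⟨rfl, hy2⟩
    by_cases hC : ∃ q ∈ C, f q = 0
    · obtain ⟨q, hqC, hq0⟩ := hC
      rw [hmemC] at hqC
      obtain ⟨u, huD, hu2⟩ := getD q hqC.1 hqC.2 hq0
      have hule : f u ≤ ∑ v ∈ D, f v :=
        Finset.single_le_sum (fun i _ => Nat.zero_le _) huD
      by_cases hD : ∃ r ∈ D, f r = 0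
      · obtain ⟨r, hrD, hr0⟩ := hD
        rw [hmemD] at hrD
        obtain ⟨w, hwC, hw2⟩ := getC r hrD.1 hrD.2 hr0
        have hwle : f w ≤ ∑ v ∈ C, f v :=
          Finset.single_le_sum (fun i _ => Nat.zero_le _) hwC
        omega
      · push_neg at hD
        by_cases hue : u = ((x1, 0) : Fin (s+1) × Fin (t+1))
        · have hpr : f u + f (x2, 0) ≤ ∑ v ∈ D, f v :=
            pair_le_sum huD mD2 (by rw [hue]; simp [Prod.ext_iff, hx12])
          have := hD _ mD2
          omega
        · have hpr : f u + f (x1, 0) ≤ ∑ v ∈ D, f v := pair_le_sum huD mD1 hue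
          have := hD _ mD1
          omega
    · push_neg at hC
      by_cases hD : ∃ r ∈ D, f r = 0
      · obtain ⟨r, hrD, hr0⟩ := hD
        rw [hmemD] at hrD
        obtain ⟨w, hwC, hw2⟩ := getC r hrD.1 hrD.2 hr0
        by_cases hwe : w = ((0, y1) : Fin (s+1) × Fin (t+1))
        · have hpr : f w + f (0, y2) ≤ ∑ v ∈ C, f v :=
            pair_le_sum hwC mC2 (by rw [hwe]; simp [Prod.ext_iff, hy12])
          have := hC _ mC2
          omega
        · have hpr : f w + f (0, y1) ≤ ∑ v ∈ C, f v := pair_le_sum hwC mC1 hwe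
          have := hC _ mC1
          omega
      · push_neg at hD
        have hprC : f (0, y1) + f (0, y2) ≤ ∑ v ∈ C, f v :=
          pair_le_sum mC1 mC2 (by simp [Prod.ext_iff, hy12])
        have hprD : f (x1, 0) + f (x2, 0) ≤ ∑ v ∈ D, f v :=
          pair_le_sum mD1 mD2 (by simp [Prod.ext_iff, hx12])
        have := hC _ mC1
        have := hC _ mC2
        have := hD _ mD1
        have := hD _ mD2
        omega
  omega

theorem stmt_18 (s t : ℕ) (hs : 2 ≤ s) (ht : 2 ≤ t) :
    trdn (dirProd (starGraph s) (starGraph t)) = 7 := by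
  have hmem : (7 : ℕ) ∈ {w | ∃ f : Fin (s+1) × Fin (t+1) → ℕ,
      IsTRDF (dirProd (starGraph s) (starGraph t)) f ∧ ∑ v, f v = w} := by
    obtain ⟨f, hf, hsum⟩ := upper s t hs ht
    exact ⟨f, hf, hsum⟩
  refine le_antisymm (Nat.sInf_le hmem) ?_
  have h2 : trdn (dirProd (starGraph s) (starGraph t)) ∈ {w | ∃ f : Fin (s+1) × Fin (t+1) → ℕ,
      IsTRDF (dirProd (starGraph s) (starGraph t)) f ∧ ∑ v, f v = w} :=
    Nat.sInf_mem ⟨7, hmem⟩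
  obtain ⟨g, hg, hgs⟩ := h2
  have := lower s t hs ht g hg
  omega
end
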